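/- Suppose nonnegative reals b₁, b₂, b₃ and constants u₁, u₂, u₃ ≥ 0 satisfy b₁ ≤ max{γ₁₂(b₂), γ₁₃(b₃), u₁}, b₂ ≤ max{γ₂₁(b₁), γ₂₃(b₃), u₂}, b₃ ≤ max{γ₃₁(b₁), γ₃₂(b₂), u₃}, where the γ_{ij} are class-K functions satisfying the cyclic small-gain conditions γ_{i₁i₂}∘⋯∘γ_{i_r i₁}(s) < s for all s>0, all cycles with distinct indices among {1,2,3} of length 2 and 3. Then there exist functions of u₁,u₂,u₃ built from compositions and maxima of the γ_{ij} bounding each b_i; in particular b₁ ≤ max{γ₁₂(max{γ₂₃(u₃), u₂}), γ₁₃∘γ₃₂(max{γ₂₃(u₃), u₂}), γ₁₃(u₃), u₁}. -/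

import Mathlib

open NNReal

def ClassK (γ : ℝ≥0 → ℝ≥0) : Prop := Continuous γ ∧ StrictMono γ ∧ γ 0 = 0

private lemma elim_bad {a c d : ℝ≥0} (h : a ≤ max c d) (hc : 0 < a → c < a) :
    a ≤ d := by
  rcases le_max_iff.mp h with h' | h'
  · rcases eq_or_lt_of_le (zero_le : 0 ≤ a) with h0 | h0
    · simpa using h0.symm.le.trans (zero_le : 0 ≤ d)
    · exact absurd h' (not_le.mpr (hc h0))
  · exact h'

theorem cyclic_smallgain_three_asymptotic_bound
    (γ₁₂ γ₁₃ γ₂₁ γ₂₃ γ₃₁ γ₃₂ : ℝ≥0 → ℝ≥0)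
    (h₁₂ : ClassK γ₁₂) (h₁₃ : ClassK γ₁₃) (h₂₁ : ClassK γ₂₁)
    (h₂₃ : ClassK γ₂₃) (h₃₁ : ClassK γ₃₁) (h₃₂ : ClassK γ₃₂)
    (hsg₁ : ∀ s : ℝ≥0, 0 < s → γ₁₂ (γ₂₁ s) < s)
    (hsg₂ : ∀ s : ℝ≥0, 0 < s → γ₁₃ (γ₃₁ s) < s)
    (hsg₃ : ∀ s : ℝ≥0, 0 < s → γ₂₃ (γ₃₂ s) < s)
    (hsg₄ : ∀ s : ℝ≥0, 0 < s → γ₁₂ (γ₂₃ (γ₃₁ s)) < s)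
    (hsg₅ : ∀ s : ℝ≥0, 0 < s → γ₁₃ (γ₃₂ (γ₂₁ s)) < s)
    (b₁ b₂ b₃ u₁ u₂ u₃ : ℝ≥0)
    (hb₁ : b₁ ≤ max (γ₁₂ b₂) (max (γ₁₃ b₃) u₁))
    (hb₂ : b₂ ≤ max (γ₂₁ b₁) (max (γ₂₃ b₃) u₂))
    (hb₃ : b₃ ≤ max (γ₃₁ b₁) (max (γ₃₂ b₂) u₃)) :
    b₁ ≤ max (γ₁₂ (max (γ₂₃ u₃) u₂))
          (max (γ₁₃ (γ₃₂ (max (γ₂₃ u₃) u₂))) (max (γ₁₃ u₃) u₁)) := by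
  obtain ⟨-, m₁₂, z₁₂⟩ := h₁₂
  obtain ⟨-, m₁₃, z₁₃⟩ := h₁₃
  obtain ⟨-, m₂₁, z₂₁⟩ := h₂₁
  obtain ⟨-, m₂₃, z₂₃⟩ := h₂₃
  obtain ⟨-, m₃₁, z₃₁⟩ := h₃₁
  obtain ⟨-, m₃₂, z₃₂⟩ := h₃₂
  have mono₁₂ := m₁₂.monotone
  have mono₁₃ := m₁₃.monotone
  have mono₂₃ := m₂₃.monotone
  have mono₃₂ := m₃₂.monotone
  set U : ℝ≥0 := max (γ₂₃ u₃) u₂ with hU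
  -- reversed small gain: γ₃₂ (γ₂₃ x) < x for x > 0
  have hrev : ∀ x : ℝ≥0, 0 < x → γ₃₂ (γ₂₃ x) < x := by
    intro x hx
    by_contra h
    push_neg at h
    have h23 : 0 < γ₂₃ x := by
      have := m₂₃.lt_iff_lt.mpr hx
      simpa [z₂₃] using this
    have := hsg₃ (γ₂₃ x) h23
    exact absurd (mono₂₃ h) (not_le.mpr this)
  -- Step (A): eliminate b₃ in hb₁, then the γ₁₃∘γ₃₁ b₁ term
  have hA : b₁ ≤ max (γ₁₂ b₂) (max (γ₁₃ (γ₃₂ b₂)) (max (γ₁₃ u₃) u₁)) := by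
    have h13 : γ₁₃ b₃ ≤ max (γ₁₃ (γ₃₁ b₁)) (max (γ₁₃ (γ₃₂ b₂)) (γ₁₃ u₃)) := by
      calc γ₁₃ b₃ ≤ γ₁₃ (max (γ₃₁ b₁) (max (γ₃₂ b₂) u₃)) := mono₁₃ hb₃
        _ = _ := by rw [mono₁₃.map_max, mono₁₃.map_max]
    have h1 : b₁ ≤ max (γ₁₃ (γ₃₁ b₁))
        (max (γ₁₂ b₂) (max (γ₁₃ (γ₃₂ b₂)) (max (γ₁₃ u₃) u₁))) := by
      refine hb₁.trans ?_
      refine max_le (by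
        apply le_max_of_le_right; exact le_max_left _ _) ?_
      refine max_le (h13.trans ?_) (by
        apply le_max_of_le_right
        apply le_max_of_le_right
        apply le_max_of_le_right
        exact le_max_right _ _)
      refine max_le (le_max_left _ _) ?_
      refine max_le ?_ ?_
      · apply le_max_of_le_right; apply le_max_of_le_right; exact le_max_left _ _
      · apply le_max_of_le_right; apply le_max_of_le_right
        apply le_max_of_le_right; exact le_max_left _ _
    exact elim_bad h1 (fun h0 => hsg₂ b₁ h0)
  -- Step (B): eliminate b₃ in hb₂, then the γ₂₃∘γ₃₂ b₂ term
  have hB : b₂ ≤ max (max (γ₂₁ b₁) (γ₂₃ (γ₃₁ b₁))) U := by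
    have h23 : γ₂₃ b₃ ≤ max (γ₂₃ (γ₃₁ b₁)) (max (γ₂₃ (γ₃₂ b₂)) (γ₂₃ u₃)) := by
      calc γ₂₃ b₃ ≤ γ₂₃ (max (γ₃₁ b₁) (max (γ₃₂ b₂) u₃)) := mono₂₃ hb₃
        _ = _ := by rw [mono₂₃.map_max, mono₂₃.map_max]
    have h1 : b₂ ≤ max (γ₂₃ (γ₃₂ b₂))
        (max (max (γ₂₁ b₁) (γ₂₃ (γ₃₁ b₁))) U) := by
      refine hb₂.trans ?_
      refine max_le (by
        apply le_max_of_le_right; apply le_max_of_le_left; exact le_max_left _ _) ?_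
      refine max_le (h23.trans ?_) (by
        apply le_max_of_le_right; apply le_max_of_le_right
        exact le_max_right _ _)
      refine max_le (by
        apply le_max_of_le_right; apply le_max_of_le_left; exact le_max_right _ _) ?_
      refine max_le (le_max_left _ _) ?_
      apply le_max_of_le_right; apply le_max_of_le_right; exact le_max_left _ _
    exact elim_bad h1 (fun h0 => hsg₃ b₂ h0)
  -- Combine: plug (B) into (A)
  set C : ℝ≥0 := max (γ₂₁ b₁) (γ₂₃ (γ₃₁ b₁)) with hC
  have h12b : γ₁₂ b₂ ≤ max (γ₁₂ C) (γ₁₂ U) := by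
    calc γ₁₂ b₂ ≤ γ₁₂ (max C U) := mono₁₂ hB
      _ = _ := mono₁₂.map_max
  have h1332b : γ₁₃ (γ₃₂ b₂) ≤ max (γ₁₃ (γ₃₂ C)) (γ₁₃ (γ₃₂ U)) := by
    calc γ₁₃ (γ₃₂ b₂) ≤ γ₁₃ (γ₃₂ (max C U)) := mono₁₃ (mono₃₂ hB)
      _ = _ := by rw [mono₃₂.map_max, mono₁₃.map_max]
  -- final: bad terms are γ₁₂ C and γ₁₃ (γ₃₂ C)
  have hmain : b₁ ≤ max (max (γ₁₂ C) (γ₁₃ (γ₃₂ C)))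
      (max (γ₁₂ U) (max (γ₁₃ (γ₃₂ U)) (max (γ₁₃ u₃) u₁))) := by
    refine hA.trans ?_
    refine max_le (h12b.trans ?_) ?_
    · refine max_le (by apply le_max_of_le_left; exact le_max_left _ _) ?_
      apply le_max_of_le_right; exact le_max_left _ _
    refine max_le (h1332b.trans ?_) ?_
    · refine max_le (by apply le_max_of_le_left; exact le_max_right _ _) ?_
      apply le_max_of_le_right; apply le_max_of_le_right; exact le_max_left _ _
    apply le_max_of_le_right; apply le_max_of_le_right; exact le_max_right _ _
  refine elim_bad hmain ?_
  intro h0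
  refine max_lt ?_ ?_
  · -- γ₁₂ C < b₁
    rw [hC, mono₁₂.map_max]
    exact max_lt (hsg₁ b₁ h0) (hsg₄ b₁ h0)
  · -- γ₁₃ (γ₃₂ C) < b₁
    rw [hC, mono₃₂.map_max, mono₁₃.map_max]
    refine max_lt (hsg₅ b₁ h0) ?_
    rcases eq_or_lt_of_le (zero_le : 0 ≤ γ₃₁ b₁) with hz | hz
    · rw [← hz, z₂₃, z₃₂, z₁₃]; exact h0
    · calc γ₁₃ (γ₃₂ (γ₂₃ (γ₃₁ b₁))) < γ₁₃ (γ₃₁ b₁) := m₁₃ (hrev _ hz)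
        _ < b₁ := hsg₂ b₁ h0
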